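/- For any finite sequence τ of distinct natural numbers and any natural number k not occurring in τ, des f(k,τ) ≥ des τ. -/

import Mathlib

namespace PaperStats

/-- `des w` is the number of descents of the word `w` (0-indexed positions `i`
with `w(i) > w(i+1)`). -/
def des (w : List ℕ) : ℕ :=
  ((Finset.range (w.length - 1)).filter fun i => w.getD (i + 1) 0 < w.getD i 0).card

/-- `inv w` is the number of inversions of the word `w`: pairs of positions
`i < j` with `w(i) > w(j)`. -/
def inv (w : List ℕ) : ℕ :=
  ((Finset.range w.length ×ˢ Finset.range w.length).filter
    fun p => p.1 < p.2 ∧ w.getD p.2 0 < w.getD p.1 0).card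

/-- An inversion `(i,j)` of `w` is admissible if either `w(j) < w(j+1)`
(`j` is not the last position and is followed by an ascent), or there is a
position `k` strictly between `i` and `j` with `w(j) > w(k)`. -/
def IsAdmissible (w : List ℕ) (i j : ℕ) : Prop :=
  (j + 1 < w.length ∧ w.getD j 0 < w.getD (j + 1) 0) ∨
    ∃ k, i < k ∧ k < j ∧ w.getD k 0 < w.getD j 0

instance (w : List ℕ) (i j : ℕ) : Decidable (IsAdmissible w i j) :=
  decidable_of_iff ((j + 1 < w.length ∧ w.getD j 0 < w.getD (j + 1) 0) ∨
      ∃ k ∈ Finset.Ioo i j, w.getD k 0 < w.getD j 0) (by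
    unfold IsAdmissible
    simp only [Finset.mem_Ioo, and_assoc])

/-- `ai w` is the number of admissible inversions of `w`. -/
def ai (w : List ℕ) : ℕ :=
  ((Finset.range w.length ×ˢ Finset.range w.length).filter
    fun p => p.1 < p.2 ∧ w.getD p.2 0 < w.getD p.1 0 ∧ IsAdmissible w p.1 p.2).card

/-- `aid w = ai w + des w`. -/
def aid (w : List ℕ) : ℕ := ai w + des w

/-- The statistic `aix`, defined recursively: `aix ∅ = 0`; writing a nonempty
word as `π = α m β`, where `m` is the smallest letter and `α` is the maximal
prefix not containing `m`, one has `aix π = 1 + aix β` if `α = ∅`,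
`aix π = 0` if `β = ∅` (and `α ≠ ∅`), and `aix π = aix α` otherwise. -/
def aix : List ℕ → ℕ
  | [] => 0
  | x :: xs =>
    if (x :: xs).takeWhile (fun a => decide (a ≠ xs.foldr min x)) = [] then
      1 + aix (((x :: xs).dropWhile (fun a => decide (a ≠ xs.foldr min x))).tail)
    else if ((x :: xs).dropWhile (fun a => decide (a ≠ xs.foldr min x))).tail = [] then 0
    else aix ((x :: xs).takeWhile (fun a => decide (a ≠ xs.foldr min x)))
termination_by w => w.length
decreasing_by
  all_goals simp only [List.foldr_attach (f := min)] at *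
  · have h1 := (List.dropWhile_sublist (l := x :: xs) (fun a => decide (a ≠ xs.foldr min x))).length_le
    have h2 := List.length_tail (l := (x :: xs).dropWhile (fun a => decide (a ≠ xs.foldr min x)))
    simp only [List.length_cons] at *
    omega
  · rename_i hα hβ
    have h0 : ((x :: xs).takeWhile (fun a => decide (a ≠ xs.foldr min x))) ++
        ((x :: xs).dropWhile (fun a => decide (a ≠ xs.foldr min x))) = x :: xs :=
      List.takeWhile_append_dropWhile ..
    have h1 : ((x :: xs).dropWhile (fun a => decide (a ≠ xs.foldr min x))) ≠ [] := by
      intro h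
      apply hβ
      rw [h]
      rfl
    have h2 := congrArg List.length h0
    simp only [List.length_append, List.length_cons] at h2
    have h3 : 0 < ((x :: xs).dropWhile (fun a => decide (a ≠ xs.foldr min x))).length :=
      List.length_pos_iff.mpr h1
    simp only [List.length_cons]
    omega

/-- The map `f(k,τ)`: with `m` the smallest letter of `τ` together with `k`
(`k` not occurring in `τ`), and `τ = α m β` with `α` the maximal prefix of `τ`
avoiding `m`: `f(k,∅) = k`; `f(k,τ) = kτ` if `k = m`; and for `k > m`,
`f(k,τ) = f(k,β) m` if `α = ∅`, `f(k,τ) = k m α` if `β = ∅`, and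
`f(k,τ) = f(k,α) m β` otherwise. -/
def fkt (k : ℕ) : List ℕ → List ℕ
  | [] => [k]
  | x :: xs =>
    if k < xs.foldr min x then k :: x :: xs
    else if (x :: xs).takeWhile (fun a => decide (a ≠ xs.foldr min x)) = [] then
      fkt k (((x :: xs).dropWhile (fun a => decide (a ≠ xs.foldr min x))).tail) ++
        [xs.foldr min x]
    else if ((x :: xs).dropWhile (fun a => decide (a ≠ xs.foldr min x))).tail = [] then
      k :: xs.foldr min x :: ((x :: xs).takeWhile (fun a => decide (a ≠ xs.foldr min x)))
    else
      fkt k ((x :: xs).takeWhile (fun a => decide (a ≠ xs.foldr min x))) ++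
        xs.foldr min x :: ((x :: xs).dropWhile (fun a => decide (a ≠ xs.foldr min x))).tail
termination_by w => w.length
decreasing_by
  all_goals simp only [List.foldr_attach (f := min)] at *
  · have h1 := (List.dropWhile_sublist (l := x :: xs) (fun a => decide (a ≠ xs.foldr min x))).length_le
    have h2 := List.length_tail (l := (x :: xs).dropWhile (fun a => decide (a ≠ xs.foldr min x)))
    simp only [List.length_cons] at *
    omega
  · rename_i hk hα hβ
    have h0 : ((x :: xs).takeWhile (fun a => decide (a ≠ xs.foldr min x))) ++
        ((x :: xs).dropWhile (fun a => decide (a ≠ xs.foldr min x))) = x :: xs :=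
      List.takeWhile_append_dropWhile ..
    have h1 : ((x :: xs).dropWhile (fun a => decide (a ≠ xs.foldr min x))) ≠ [] := by
      intro h
      apply hβ
      rw [h]
      rfl
    have h2 := congrArg List.length h0
    simp only [List.length_append, List.length_cons] at h2
    have h3 : 0 < ((x :: xs).dropWhile (fun a => decide (a ≠ xs.foldr min x))).length :=
      List.length_pos_iff.mpr h1
    simp only [List.length_cons]
    omega

/-- `ini w` is the first letter of `w`. -/
def ini (w : List ℕ) : ℕ := w.headD 0

/-- The word of a permutation `π ∈ S_n`, namely `π(1) π(2) … π(n)`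
(with values in `{1, …, n}`). -/
def permList {n : ℕ} (π : Equiv.Perm (Fin n)) : List ℕ :=
  List.ofFn fun i => (π i : ℕ) + 1

/-- The bijection `φ`: `φ(π) = f(π(1), f(π(2), ⋯ f(π(n), ∅) ⋯ ))`. -/
def phiW (w : List ℕ) : List ℕ := w.foldr fkt []

/-- Helper: `decRun l` splits `l` into its maximal weakly decreasing prefix
and the rest. -/
def decRun : List ℕ → List ℕ × List ℕ
  | [] => ([], [])
  | [x] => ([x], [])
  | x :: y :: rest =>
    if y ≤ x then ((x :: (decRun (y :: rest)).1), (decRun (y :: rest)).2)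
    else ([x], y :: rest)

theorem decRun_append : ∀ l : List ℕ, (decRun l).1 ++ (decRun l).2 = l
  | [] => rfl
  | [x] => rfl
  | x :: y :: rest => by
    rw [decRun]
    split
    · simpa using decRun_append (y :: rest)
    · rfl

/-- Helper computing the hook factorization of a word from its reversal: the
rightmost hook of the word starts at its rightmost descent top, i.e. it is
obtained by extending the maximal weakly decreasing prefix of the reversed word
by one more letter; the process is repeated on what remains, and when no
letters usable for a hook remain the word left over is the increasing part
`π₀`. The result is `(π₀, [π₁, …, π_k])`. -/
def hookRev (r : List ℕ) : List ℕ × List (List ℕ) :=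
  match h : (decRun r).2 with
  | [] => (r.reverse, [])
  | z :: rest =>
    ((hookRev rest).1, (hookRev rest).2 ++ [z :: (decRun r).1.reverse])
termination_by r.length
decreasing_by
  have h2 := congrArg List.length (decRun_append r)
  rw [h] at h2
  simp only [List.length_append, List.length_cons] at h2
  omega

/-- The hook factorization `(π₀, [π₁, …, π_k])` of a word
`w = π₀ π₁ ⋯ π_k`, where `π₀` is increasing and each `π_i`, `i ≥ 1`, is a
hook. -/
def hookSplit (w : List ℕ) : List ℕ × List (List ℕ) := hookRev w.reverse

/-- `pix w` is the length of the initial increasing factor `π₀` in the hook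
factorization of `w`. -/
def pix (w : List ℕ) : ℕ := (hookSplit w).1.length

/-- `lec w` is the sum of the numbers of inversions of the hooks in the hook
factorization of `w`. -/
def lec (w : List ℕ) : ℕ := ((hookSplit w).2.map inv).sum

/-- A word `w(1) … w(r)` with `r ≥ 2` is a hook if
`w(1) > w(2) ≤ w(3) ≤ ⋯ ≤ w(r)`. -/
def IsHook (w : List ℕ) : Prop :=
  ∃ a b rest, w = a :: b :: rest ∧ b < a ∧ List.Chain' (· ≤ ·) (b :: rest)

/-- `w(i)` is a left-to-right maximum of `w` if `w(k) < w(i)` for all `k < i`. -/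
def IsLRMax (w : List ℕ) (i : ℕ) : Prop := ∀ k < i, w.getD k 0 < w.getD i 0

instance (w : List ℕ) (i : ℕ) : Decidable (IsLRMax w i) := by
  unfold IsLRMax; infer_instance

/-- `mix w` counts the pairs of positions `i < j` such that either
`w(i) > w(j)` and `w(i)` is a left-to-right maximum, or `w(i) < w(j)` and
there is `k < i` with `w(k) > w(j)`. -/
def mix (w : List ℕ) : ℕ :=
  ((Finset.range w.length ×ˢ Finset.range w.length).filter fun p =>
    p.1 < p.2 ∧ ((w.getD p.2 0 < w.getD p.1 0 ∧ IsLRMax w p.1) ∨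
      (w.getD p.1 0 < w.getD p.2 0 ∧ ∃ k ∈ Finset.range p.1, w.getD p.2 0 < w.getD k 0))).card

/-- `das w` counts the positions `i` such that either `w(i) > w(i+1)` and
`w(i)` is a left-to-right maximum, or `w(i) < w(i+1)` and there is `k < i`
with `w(k) > w(i+1)`. -/
def das (w : List ℕ) : ℕ :=
  ((Finset.range (w.length - 1)).filter fun i =>
    (w.getD (i + 1) 0 < w.getD i 0 ∧ IsLRMax w i) ∨
      (w.getD i 0 < w.getD (i + 1) 0 ∧ ∃ k ∈ Finset.range i, w.getD (i + 1) 0 < w.getD k 0)).card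

/-- The values of the left-to-right maxima of a word, listed in increasing
order (which is also their order of occurrence). -/
def lrMaxima : List ℕ → List ℕ
  | [] => []
  | x :: xs => x :: lrMaxima (xs.filter fun a => decide (x < a))
termination_by l => l.length
decreasing_by
  have := xs.length_filter_le (fun a => decide (x < a))
  rw [List.unattach_filter (g := fun a => decide (x < a)) (hf := fun _ _ => rfl), List.unattach_attach]
  simp only [List.length_cons]
  omega

/-- `Bset w m` is the list of entries of `w` that are smaller than `m` and lie
to the right of (the first occurrence of) `m` in `w`. -/
def Bset (w : List ℕ) (m : ℕ) : List ℕ :=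
  ((w.dropWhile fun a => decide (a ≠ m)).tail).filter fun a => decide (a < m)

/-- Helper for `psiS`: replace the letters satisfying `P`, in order, by the
letters of the first list. -/
def replaceSub (P : ℕ → Bool) : List ℕ → List ℕ → List ℕ
  | _, [] => []
  | rs, x :: xs =>
    if P x then rs.headD x :: replaceSub P rs.tail xs else x :: replaceSub P rs xs

/-- `psiS S w` is `ψ_S(w)`: the result of reversing, in place, the subword of
`w` consisting of the entries belonging to `S`. -/
def psiS (S : List ℕ) (w : List ℕ) : List ℕ :=
  replaceSub (fun a => decide (a ∈ S)) ((w.filter fun a => decide (a ∈ S)).reverse) w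

/-- Helper applying the alternating composition
`ψ_{B₁} ∘ ψ_{B₂ ∩ B₁} ∘ ψ_{B₂} ∘ ⋯ ∘ ψ_{B_{k-1}} ∘ ψ_{B_k ∩ B_{k-1}} ∘ ψ_{B_k}`
to `w`, given the list `[B_k, B_{k-1}, …, B₁]`. -/
def psiChain : List (List ℕ) → List ℕ → List ℕ
  | [], w => w
  | [B], w => psiS B w
  | B :: B' :: rest, w => psiChain (B' :: rest) (psiS (B.inter B') (psiS B w))

/-- The Brändén–Claesson bijection `ψ`. -/
def psi (w : List ℕ) : List ℕ :=
  psiChain (((lrMaxima w).map (Bset w)).reverse) w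

lemma des_nil : des [] = 0 := rfl
lemma des_single (x : ℕ) : des [x] = 0 := rfl

lemma des_cons_cons (x y : ℕ) (l : List ℕ) :
    des (x :: y :: l) = (if y < x then 1 else 0) + des (y :: l) := by
  unfold des
  rw [Finset.card_filter, Finset.card_filter]
  simp only [List.length_cons, Nat.add_sub_cancel]
  rw [Finset.sum_range_succ']
  simp only [List.getD_cons_succ, List.getD_cons_zero]
  omega

lemma des_cons_le (x : ℕ) (l : List ℕ) : des l ≤ des (x :: l) := by
  cases l with
  | nil => simp [des]
  | cons y l => rw [des_cons_cons]; omega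

lemma des_append_cons : ∀ (u : List ℕ), u ≠ [] → ∀ (b : ℕ) (v : List ℕ),
    des (u ++ b :: v) = des u + des (b :: v) + (if b < u.getLastD 0 then 1 else 0)
  | [], h => absurd rfl h
  | [a], _ => by
    intro b v
    simp only [List.cons_append, List.nil_append, des_cons_cons, des_single,
      List.getLastD_cons, List.getLastD_nil]
    omega
  | a :: c :: u, _ => by
    intro b v
    have ih := des_append_cons (c :: u) (by simp) b v
    simp only [List.cons_append] at *
    rw [des_cons_cons, des_cons_cons a c, ih]
    simp only [List.getLastD_cons]
    omega

lemma foldr_min_le (x : ℕ) (xs : List ℕ) : ∀ a ∈ x :: xs, xs.foldr min x ≤ a := by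
  induction xs with
  | nil => simp
  | cons y ys ih =>
    intro a ha
    simp only [List.mem_cons] at ha
    simp only [List.foldr_cons]
    rcases ha with rfl | rfl | h
    · exact le_trans (min_le_right _ _) (ih a (by simp))
    · exact min_le_left _ _
    · exact le_trans (min_le_right _ _) (ih a (by simp [h]))

lemma foldr_min_mem (x : ℕ) (xs : List ℕ) : xs.foldr min x ∈ x :: xs := by
  induction xs with
  | nil => simp
  | cons y ys ih =>
    simp only [List.foldr_cons]
    rcases min_choice y (ys.foldr min x) with h | h <;> rw [h]
    · simp
    · simp only [List.mem_cons] at ih ⊢; tauto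

lemma drop_ne_nil (x : ℕ) (xs : List ℕ) :
    (x :: xs).dropWhile (fun a => decide (a ≠ xs.foldr min x)) ≠ [] := by
  intro h
  have h2 := List.dropWhile_eq_nil_iff.mp h _ (foldr_min_mem x xs)
  simp at h2

lemma decomp (x : ℕ) (xs : List ℕ) :
    (x :: xs).takeWhile (fun a => decide (a ≠ xs.foldr min x)) ++
      xs.foldr min x :: ((x :: xs).dropWhile (fun a => decide (a ≠ xs.foldr min x))).tail
      = x :: xs := by
  have hne := drop_ne_nil x xs
  have hh := List.head_dropWhile_not (fun a => decide (a ≠ xs.foldr min x)) hne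
  simp only [decide_eq_false_iff_not, not_not] at hh
  conv_rhs => rw [← List.takeWhile_append_dropWhile
    (p := fun a => decide (a ≠ xs.foldr min x)) (l := x :: xs)]
  congr 1
  have ht := List.cons_head_tail hne
  rw [hh] at ht
  exact ht

lemma fkt_perm : ∀ (n : ℕ) (τ : List ℕ), τ.length ≤ n → ∀ k, (fkt k τ).Perm (k :: τ) := by
  intro n
  induction n with
  | zero =>
    intro τ hτ k
    rw [List.length_eq_zero_iff.mp (Nat.le_zero.mp hτ)]
    rw [fkt]
  | succ n ih =>
    intro τ hτ k
    match τ with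
    | [] => rw [fkt]
    | x :: xs =>
      have hd := decomp x xs
      have hlen := congrArg List.length hd
      simp only [List.length_append, List.length_cons] at hlen
      simp only [List.length_cons] at hτ
      rw [fkt]
      split_ifs with h1 h2 h3
      · exact List.Perm.refl _
      · rw [h2, List.nil_append] at hd
        have hβ : ((x :: xs).dropWhile (fun a => decide (a ≠ xs.foldr min x))).tail.length ≤ n := by
          have := congrArg List.length hd
          simp only [List.length_cons] at this
          omega
        refine ((ih _ hβ k).append_right [xs.foldr min x]).trans ?_
        conv_rhs => rw [← hd]
        exact (List.perm_append_singleton _ _).cons k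
      · rw [h3] at hd
        refine List.Perm.cons k ?_
        conv_rhs => rw [← hd]
        exact (List.perm_append_singleton _ _).symm
      · have hα : ((x :: xs).takeWhile (fun a => decide (a ≠ xs.foldr min x))).length ≤ n := by
          omega
        refine ((ih _ hα k).append_right _).trans ?_
        conv_rhs => rw [← hd]
        exact List.Perm.refl _

lemma fkt_ne_nil (k : ℕ) (τ : List ℕ) : fkt k τ ≠ [] := by
  intro h
  have := (fkt_perm τ.length τ le_rfl k).length_eq
  rw [h] at this
  simp at this

lemma fkt_mem {k : ℕ} {τ : List ℕ} {a : ℕ} (h : a ∈ fkt k τ) : a = k ∨ a ∈ τ := by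
  have := (fkt_perm τ.length τ le_rfl k).mem_iff.mp h
  simpa using this

lemma getLastD_mem : ∀ (l : List ℕ), l ≠ [] → ∀ d, l.getLastD d ∈ l
  | [], h => absurd rfl h
  | [x], _ => by simp
  | x :: y :: l, _ => by
    intro d
    rw [List.getLastD_cons]
    have := getLastD_mem (y :: l) (by simp) x
    simp only [List.getLastD_cons] at this ⊢
    simp only [List.mem_cons] at this ⊢
    tauto

lemma des_cons_of_le (m : ℕ) (l : List ℕ) (h : ∀ a ∈ l, m ≤ a) : des (m :: l) ≤ des l := by
  cases l with
  | nil => simp [des]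
  | cons y l =>
    rw [des_cons_cons]
    have := h y (by simp)
    simp [Nat.not_lt_of_le this]

lemma des_fkt_aux : ∀ (n : ℕ) (τ : List ℕ), τ.length ≤ n → ∀ k, k ∉ τ →
    des τ ≤ des (fkt k τ) := by
  intro n
  induction n with
  | zero =>
    intro τ hτ k _
    rw [List.length_eq_zero_iff.mp (Nat.le_zero.mp hτ)]
    simp [des]
  | succ n ih =>
    intro τ hτ k hk
    match τ with
    | [] => simp [des]
    | x :: xs =>
      have hd := decomp x xs
      have hlen := congrArg List.length hd
      simp only [List.length_append, List.length_cons] at hlen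
      simp only [List.length_cons] at hτ
      have hmin := foldr_min_le x xs
      rw [fkt]
      split_ifs with h1 h2 h3
      · exact des_cons_le k _
      all_goals have hmk : xs.foldr min x < k :=
        Nat.lt_of_le_of_ne (Nat.le_of_not_lt h1) (Ne.symm fun h => hk (h ▸ foldr_min_mem x xs))
      · -- α = [] : fkt = fkt k β ++ [m]
        rw [h2, List.nil_append] at hd
        have hβlen : ((x :: xs).dropWhile (fun a => decide (a ≠ xs.foldr min x))).tail.length ≤ n := by
          have := congrArg List.length hd
          simp only [List.length_cons] at this
          omega
        have hkβ : k ∉ ((x :: xs).dropWhile (fun a => decide (a ≠ xs.foldr min x))).tail := by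
          intro h
          exact hk (hd ▸ List.mem_cons_of_mem _ h)
        have hIH := ih _ hβlen k hkβ
        have h5 := des_append_cons
          (fkt k (((x :: xs).dropWhile (fun a => decide (a ≠ xs.foldr min x))).tail))
          (fkt_ne_nil k _) (xs.foldr min x) []
        have h6 : des (x :: xs) ≤
            des (((x :: xs).dropWhile (fun a => decide (a ≠ xs.foldr min x))).tail) := by
          conv_lhs => rw [← hd]
          exact des_cons_of_le _ _ (fun a ha => hmin a (hd ▸ List.mem_cons_of_mem _ ha))
        omega
      · -- β = [] : fkt = k :: m :: α
        rw [h3] at hd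
        have hd2 := des_append_cons _ h2 (xs.foldr min x) []
        rw [hd] at hd2
        have h5 : des (k :: xs.foldr min x :: (x :: xs).takeWhile (fun a => decide (a ≠ xs.foldr min x)))
            = 1 + des (xs.foldr min x :: (x :: xs).takeWhile (fun a => decide (a ≠ xs.foldr min x))) := by
          rw [des_cons_cons, if_pos hmk]
        have h6 := des_cons_le (xs.foldr min x)
          ((x :: xs).takeWhile (fun a => decide (a ≠ xs.foldr min x)))
        have h7 : des [xs.foldr min x] = 0 := des_single _
        split_ifs at hd2 <;> omega
      · -- general : fkt = fkt k α ++ m :: β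
        have hαlen : ((x :: xs).takeWhile (fun a => decide (a ≠ xs.foldr min x))).length ≤ n := by
          omega
        have hkα : k ∉ (x :: xs).takeWhile (fun a => decide (a ≠ xs.foldr min x)) := by
          intro h
          exact hk (hd ▸ List.mem_append_left _ h)
        have hIH := ih _ hαlen k hkα
        have hd2 := des_append_cons _ h2 (xs.foldr min x)
          (((x :: xs).dropWhile (fun a => decide (a ≠ xs.foldr min x))).tail)
        rw [hd] at hd2
        have hd3 := des_append_cons (fkt k ((x :: xs).takeWhile (fun a => decide (a ≠ xs.foldr min x))))
          (fkt_ne_nil k _) (xs.foldr min x)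
          (((x :: xs).dropWhile (fun a => decide (a ≠ xs.foldr min x))).tail)
        have hlast : xs.foldr min x <
            (fkt k ((x :: xs).takeWhile (fun a => decide (a ≠ xs.foldr min x)))).getLastD 0 := by
          have hm := getLastD_mem _ (fkt_ne_nil k ((x :: xs).takeWhile (fun a => decide (a ≠ xs.foldr min x)))) 0
          rcases fkt_mem hm with h | h
          · rw [h]; exact hmk
          · have h8 : _ ≤ _ := hmin _ (hd ▸ List.mem_append_left _ h)
            have h9 := List.mem_takeWhile_imp h
            simp only [decide_eq_true_eq] at h9
            omega
        rw [hd3, if_pos hlast]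
        split_ifs at hd2 <;> omega

/-- `des f(k,τ) ≥ des τ`. -/
theorem des_fkt_ge (k : ℕ) (τ : List ℕ) (hτ : τ.Nodup) (hk : k ∉ τ) :
    des τ ≤ des (fkt k τ) :=
  des_fkt_aux τ.length τ le_rfl k hk

end PaperStats
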